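/- Let R be a commutative ring in which every n-absorbing ideal is strongly n-absorbing (for all positive integers n), and let I be a radical ideal of R. If I is an n-absorbing ideal of R, then I[X] is an n-absorbing ideal of R[X]. -/

import Mathlib

open Polynomial

/-- A proper ideal `I` is `n`-absorbing if whenever a product of `n+1` elements lies in `I`,
the product of some `n` of them lies in `I`. -/
def IsNAbsorbing {R : Type*} [CommRing R] (I : Ideal R) (n : ℕ) : Prop :=
  I ≠ ⊤ ∧ ∀ x : Fin (n + 1) → R, (∏ i, x i) ∈ I →
    ∃ j, (∏ i ∈ Finset.univ.erase j, x i) ∈ I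

/-- A proper ideal `I` is strongly `n`-absorbing if whenever a product of `n+1` ideals is
contained in `I`, the product of some `n` of them is contained in `I`. -/
def IsStronglyNAbsorbing {R : Type*} [CommRing R] (I : Ideal R) (n : ℕ) : Prop :=
  I ≠ ⊤ ∧ ∀ J : Fin (n + 1) → Ideal R, (∏ i, J i) ≤ I →
    ∃ j, (∏ i ∈ Finset.univ.erase j, J i) ≤ I

/-- The content of a polynomial: the ideal generated by its coefficients. -/
def polyContent {R : Type*} [CommRing R] (f : R[X]) : Ideal R :=
  Ideal.span (Set.range f.coeff)

lemma polyContent_le_iff {R : Type*} [CommRing R] {f : R[X]} {P : Ideal R} :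
    polyContent f ≤ P ↔ ∀ k, f.coeff k ∈ P := by
  rw [polyContent, Ideal.span_le, Set.range_subset_iff]; rfl

lemma mem_map_C_polyContent {R : Type*} [CommRing R] (f : R[X]) :
    f ∈ (polyContent f).map (C : R →+* R[X]) := by
  rw [Ideal.mem_map_C_iff]
  exact fun k => Ideal.subset_span ⟨k, rfl⟩

lemma map_C_prod {R : Type*} [CommRing R] {ι : Type*} (s : Finset ι) (J : ι → Ideal R) :
    (∏ i ∈ s, J i).map (C : R →+* R[X]) = ∏ i ∈ s, (J i).map (C : R →+* R[X]) := by
  classical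
  induction s using Finset.induction_on with
  | empty => simp [Ideal.one_eq_top, Ideal.map_top]
  | insert _ _ hx ih => rw [Finset.prod_insert hx, Finset.prod_insert hx, Ideal.map_mul, ih]

/-- If in `R` every `n`-absorbing ideal is strongly `n`-absorbing and `I` is a radical
`n`-absorbing ideal, then `I[X]` is `n`-absorbing. -/
theorem isNAbsorbing_map_C_of_radical {R : Type*} [CommRing R]
    (h : ∀ (n : ℕ), 0 < n → ∀ J : Ideal R, IsNAbsorbing J n → IsStronglyNAbsorbing J n)
    (I : Ideal R) (hrad : I.radical = I) (n : ℕ) (hn : 0 < n)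
    (hI : IsNAbsorbing I n) : IsNAbsorbing (I.map (C : R →+* R[X])) n := by
  classical
  constructor
  · intro htop
    apply hI.1
    rw [Ideal.eq_top_iff_one] at htop ⊢
    rw [Ideal.mem_map_C_iff] at htop
    simpa using htop 0
  · intro x hx
    -- product of contents lies in I
    have hcont : (∏ i, polyContent (x i)) ≤ I := by
      rw [← hrad, Ideal.radical_eq_sInf]
      refine le_sInf ?_
      rintro P ⟨hIP, hP⟩
      rw [hP.prod_le]
      -- map to (R/P)[X], a domain
      have hdom : ∀ f : R[X], f ∈ I.map (C : R →+* R[X]) →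
          f.map (Ideal.Quotient.mk P) = (0 : (R ⧸ P)[X]) := by
        intro f hf
        rw [Ideal.mem_map_C_iff] at hf
        ext k
        simp only [coeff_map, coeff_zero, Ideal.Quotient.eq_zero_iff_mem]
        exact hIP (hf k)
      have h0 : ∏ i, (x i).map (Ideal.Quotient.mk P) = (0 : (R ⧸ P)[X]) := by
        rw [← Polynomial.map_prod]
        exact hdom _ hx
      have := Finset.prod_eq_zero_iff.mp h0
      obtain ⟨i, -, hi⟩ := this
      refine ⟨i, Finset.mem_univ i, polyContent_le_iff.mpr fun k => ?_⟩
      rw [← Ideal.Quotient.eq_zero_iff_mem, ← coeff_map, hi, coeff_zero]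
    obtain ⟨j, hj⟩ := (h n hn I hI).2 (fun i => polyContent (x i)) hcont
    refine ⟨j, ?_⟩
    have hmem : (∏ i ∈ Finset.univ.erase j, x i) ∈
        ∏ i ∈ Finset.univ.erase j, (polyContent (x i)).map (C : R →+* R[X]) :=
      Ideal.prod_mem_prod fun i _ => mem_map_C_polyContent (x i)
    rw [← map_C_prod] at hmem
    exact Ideal.map_mono hj hmem
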